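/- A sequence (d(1), …, d(k)) of non-negative integers is the pre-order (depth-first) degree sequence of some rooted plane tree with k vertices if and only if Σ_{i=1}^{j} d(i) ≥ j for every 1 ≤ j ≤ k−1 and Σ_{i=1}^{k} d(i) = k−1. Moreover, the tree is uniquely determined by its pre-order degree sequence. -/

import Mathlib

inductive PTree : Type where
  | node : List PTree → PTree

namespace PTree

/-- The number of vertices of a rooted plane tree. -/
def size : PTree → ℕ
  | node ts => 1 + (ts.attach.map (fun x => size x.1)).sum
decreasing_by
  simp only [PTree.node.sizeOf_spec]
  have := List.sizeOf_lt_of_mem x.2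
  omega

/-- `degCount i T` is the number of vertices of `T` with exactly `i` children. -/
def degCount (i : ℕ) : PTree → ℕ
  | node ts => (if ts.length = i then 1 else 0) + (ts.attach.map (fun x => degCount i x.1)).sum
decreasing_by
  simp only [PTree.node.sizeOf_spec]
  have := List.sizeOf_lt_of_mem x.2
  omega

end PTree
namespace PTree

/-- The pre-order (depth-first) degree sequence of a rooted plane tree. -/
def degList : PTree → List ℕ
  | node ts => ts.length :: (ts.attach.map (fun x => degList x.1)).flatten
decreasing_by
  simp only [PTree.node.sizeOf_spec]
  have := List.sizeOf_lt_of_mem x.2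
  omega

end PTree

namespace PTree

lemma degList_node (ts : List PTree) :
    (node ts).degList = ts.length :: (ts.map degList).flatten := by
  rw [degList, List.attach_map_val]

lemma sizeOf_mem_lt {t : PTree} {ts : List PTree} (h : t ∈ ts) :
    sizeOf t < sizeOf (node ts) := by
  have h1 := List.sizeOf_lt_of_mem h
  have h2 : sizeOf (node ts) = 1 + sizeOf ts := by simp
  omega

/-- predicate: good degree sequence conditions for a single tree -/
def Good (l : List ℕ) : Prop :=
  (∀ j < l.length, j ≤ (l.take j).sum) ∧ l.sum + 1 = l.length

lemma flat_sum (ts : List PTree) (h : ∀ t ∈ ts, t.degList.sum + 1 = t.degList.length) :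
    (ts.map degList).flatten.sum + ts.length = (ts.map degList).flatten.length := by
  induction ts with
  | nil => simp
  | cons t ts ih =>
    have h1 := h t (by simp)
    have h2 := ih (fun t ht => h t (by simp [ht]))
    simp only [List.map_cons, List.flatten_cons, List.sum_append, List.length_append,
      List.length_cons]
    omega

lemma flat_prefix (ts : List PTree) (h : ∀ t ∈ ts, Good t.degList) :
    ∀ m < (ts.map degList).flatten.length,
      m < ((ts.map degList).flatten.take m).sum + ts.length := by
  induction ts with
  | nil => simp
  | cons t ts ih =>
    intro m hm
    simp only [List.map_cons, List.flatten_cons] at hm ⊢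
    have ht := h t (by simp)
    by_cases hcase : m < t.degList.length
    · rw [List.take_append_of_le_length (le_of_lt hcase)]
      have : m ≤ (t.degList.take m).sum := ht.1 m hcase
      simp only [List.length_cons]; omega
    · push_neg at hcase
      rw [List.take_append, List.take_of_length_le hcase]
      have hm' : m - t.degList.length < (ts.map degList).flatten.length := by
        simp only [List.length_append] at hm; omega
      have h3 := ih (fun t ht => h t (by simp [ht])) (m - t.degList.length) hm'
      have h4 := ht.2
      simp only [List.sum_append, List.length_cons]
      omega

lemma good_degList (T : PTree) : Good T.degList := by
  have key : ∀ n, ∀ T : PTree, sizeOf T ≤ n → Good T.degList := by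
    intro n
    induction n with
    | zero => intro T h; obtain ⟨ts⟩ := T; simp at h
    | succ n ih =>
      rintro ⟨ts⟩ h
      have hmem : ∀ t ∈ ts, Good t.degList := by
        intro t ht
        exact ih t (by have := sizeOf_mem_lt ht; omega)
      rw [degList_node]
      constructor
      · intro j hj
        match j with
        | 0 => simp
        | m + 1 =>
          simp only [List.length_cons] at hj
          rw [List.take_succ_cons]
          have := flat_prefix ts hmem m (by omega)
          simp only [List.sum_cons]
          omega
      · have := flat_sum ts (fun t ht => (hmem t ht).2)
        simp only [List.sum_cons, List.length_cons]
        omega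
  exact key (sizeOf T) T le_rfl

lemma degList_ne_nil (T : PTree) : T.degList ≠ [] := by
  obtain ⟨ts⟩ := T; rw [degList_node]; simp

lemma degList_injective : ∀ T₁ T₂ : PTree, T₁.degList = T₂.degList → T₁ = T₂ := by
  have key : ∀ n, ∀ T₁ T₂ : PTree, sizeOf T₁ ≤ n → T₁.degList = T₂.degList → T₁ = T₂ := by
    intro n
    induction n with
    | zero => rintro ⟨ts⟩ T₂ h; simp at h
    | succ n ih =>
      rintro ⟨ts₁⟩ ⟨ts₂⟩ hsz heq
      rw [degList_node, degList_node] at heq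
      obtain ⟨hlen, hflat⟩ := List.cons.inj heq
      have hrec : ∀ t₁ ∈ ts₁, ∀ t₂ : PTree, t₁.degList = t₂.degList → t₁ = t₂ := by
        intro t₁ ht₁ t₂ h
        exact ih t₁ t₂ (by have := sizeOf_mem_lt ht₁; omega) h
      congr 1
      clear heq hsz ih
      induction ts₁ generalizing ts₂ with
      | nil =>
        cases ts₂ with
        | nil => rfl
        | cons t ts => simp at hlen
      | cons t₁ ts₁ ih₂ =>
        cases ts₂ with
        | nil => simp at hlen
        | cons t₂ ts₂ =>
          simp only [List.map_cons, List.flatten_cons] at hflat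
          have hdeq : t₁.degList = t₂.degList := by
            have g₁ := good_degList t₁
            have g₂ := good_degList t₂
            rcases lt_trichotomy t₁.degList.length t₂.degList.length with h | h | h
            · exfalso
              have hpre : t₁.degList = t₂.degList.take t₁.degList.length := by
                have := congrArg (List.take t₁.degList.length) hflat
                rwa [List.take_append_of_le_length le_rfl,
                  List.take_append_of_le_length (le_of_lt h), List.take_length] at this
              have h5 := g₂.1 t₁.degList.length h
              rw [← hpre] at h5
              have h6 := g₁.2
              omega
            · exact (List.append_inj hflat (by omega)).1
            · exfalso
              have hpre : t₂.degList = t₁.degList.take t₂.degList.length := by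
                have := congrArg (List.take t₂.degList.length) hflat.symm
                rwa [List.take_append_of_le_length le_rfl,
                  List.take_append_of_le_length (le_of_lt h), List.take_length] at this
              have h5 := g₁.1 t₂.degList.length h
              rw [← hpre] at h5
              have h6 := g₂.2
              omega
          have ht : t₁ = t₂ := hrec t₁ (by simp) t₂ hdeq
          have hflat' : (ts₁.map degList).flatten = (ts₂.map degList).flatten := by
            rw [hdeq] at hflat
            exact (List.append_cancel_left hflat)
          have := ih₂ ts₂ (by simpa using hlen) hflat' (fun t ht => hrec t (by simp [ht]))
          rw [ht, this]
  intro T₁ T₂ h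
  exact key (sizeOf T₁) T₁ T₂ le_rfl h

lemma exists_forest : ∀ N (l : List ℕ) (c : ℕ), l.length ≤ N →
    (∀ j < l.length, j < (l.take j).sum + c) → l.sum + c = l.length →
    ∃ ts : List PTree, ts.length = c ∧ (ts.map degList).flatten = l := by
  intro N
  induction N with
  | zero =>
    intro l c hl hpre hsum
    have : l = [] := List.length_eq_zero_iff.mp (by omega)
    subst this
    simp at hsum
    subst hsum
    exact ⟨[], rfl, rfl⟩
  | succ N ih =>
    intro l c hl hpre hsum
    cases l with
    | nil =>
      simp at hsum; subst hsum; exact ⟨[], rfl, rfl⟩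
    | cons a rest =>
      cases c with
      | zero =>
        have := hpre 0 (by simp)
        simp at this
      | succ c' =>
        have hpre' : ∀ j < rest.length, j < (rest.take j).sum + (a + c') := by
          intro j hj
          have := hpre (j + 1) (by simp; omega)
          rw [List.take_succ_cons] at this
          simp only [List.sum_cons] at this
          omega
        have hsum' : rest.sum + (a + c') = rest.length := by
          simp only [List.sum_cons, List.length_cons] at hsum
          omega
        obtain ⟨ts', hts'len, hts'flat⟩ := ih rest (a + c') (by simp at hl; omega) hpre' hsum'
        refine ⟨node (ts'.take a) :: ts'.drop a, ?_, ?_⟩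
        · simp [hts'len]
        · simp only [List.map_cons, List.flatten_cons, degList_node]
          rw [List.length_take, hts'len, min_eq_left (by omega)]
          rw [List.cons_append]
          congr 1
          rw [← List.flatten_append, ← List.map_append, List.take_append_drop, hts'flat]

end PTree

/-- A nonempty sequence `d` of non-negative integers is the pre-order degree sequence of some
rooted plane tree iff `∑_{i=1}^j d(i) ≥ j` for all `1 ≤ j ≤ k-1` and `∑_{i=1}^k d(i) = k-1`;
moreover, a tree is uniquely determined by its pre-order degree sequence. -/
theorem stmt_5 (d : List ℕ) (hd : d ≠ []) :
    ((∃ T : PTree, T.degList = d) ↔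
      ((∀ j, 1 ≤ j → j < d.length → j ≤ (d.take j).sum) ∧ d.sum = d.length - 1)) ∧
    (∀ T₁ T₂ : PTree, T₁.degList = T₂.degList → T₁ = T₂) := by
  have hlen : 1 ≤ d.length := List.length_pos_iff.mpr hd
  refine ⟨⟨?_, ?_⟩, PTree.degList_injective⟩
  · rintro ⟨T, rfl⟩
    have g := PTree.good_degList T
    exact ⟨fun j _ hj => g.1 j hj, by have := g.2; omega⟩
  · rintro ⟨hpre, hsum⟩
    obtain ⟨ts, hlen1, hflat⟩ := PTree.exists_forest d.length d 1 le_rfl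
      (fun j hj => by
        match j with
        | 0 => omega
        | m + 1 => have := hpre (m + 1) (by omega) hj; omega)
      (by omega)
    match ts, hlen1 with
    | [t], _ => exact ⟨t, by simpa using hflat⟩
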